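/- (q-binomial box decomposition) For a positive integer s and non-negative integers m and u with u ≤ m, one has 1/(q;q)_{s+m} = Σ_{m' ≥ 0} q^{(m'−u)(s+m')} / (q;q)_{s+m'} · qbinom(m−u, m'−u), where the sum effectively runs over u ≤ m' ≤ m. -/

import Mathlib

open PowerSeries

/-- The finite q-Pochhammer symbol `(q;q)_N = Π_{j=1}^{N} (1 − q^j)` as a formal power
series in `q` over `ℚ`. -/
noncomputable def qp (N : ℕ) : PowerSeries ℚ :=
  ∏ j ∈ Finset.Icc 1 N, (1 - (PowerSeries.X : PowerSeries ℚ) ^ j)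

/-- The Gaussian binomial coefficient `qbinom n k = (q;q)_n / ((q;q)_k (q;q)_{n−k})`,
equal to `0` when `k > n`. -/
noncomputable def qbinom (n k : ℕ) : PowerSeries ℚ :=
  if k ≤ n then qp n * (qp k)⁻¹ * (qp (n - k))⁻¹ else 0

namespace QBoxAux

lemma qp_constantCoeff (N : ℕ) : constantCoeff (R := ℚ) (qp N) = 1 := by
  unfold qp
  rw [map_prod]
  refine Finset.prod_eq_one fun j hj => ?_
  have hj1 : 1 ≤ j := (Finset.mem_Icc.mp hj).1
  rw [map_sub, map_one, map_pow, constantCoeff_X, zero_pow (by omega), sub_zero]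

lemma qp_cc_ne (N : ℕ) : constantCoeff (R := ℚ) (qp N) ≠ 0 := by
  rw [qp_constantCoeff]; exact one_ne_zero

lemma qp_mul_inv (N : ℕ) : qp N * (qp N)⁻¹ = 1 :=
  PowerSeries.mul_inv_cancel _ (qp_cc_ne N)

lemma qp_zero : qp 0 = 1 := by unfold qp; simp

lemma qp_succ (N : ℕ) : qp (N + 1) = qp N * (1 - (PowerSeries.X : PowerSeries ℚ) ^ (N + 1)) := by
  unfold qp
  rw [Finset.prod_Icc_succ_top (by omega)]

/-- The embedding into Laurent series. -/
noncomputable def f : PowerSeries ℚ →+* LaurentSeries ℚ := HahnSeries.ofPowerSeries ℤ ℚ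

lemma f_inj : Function.Injective f := HahnSeries.ofPowerSeries_injective

noncomputable def Q (N : ℕ) : LaurentSeries ℚ := f (qp N)

noncomputable def x : LaurentSeries ℚ := f PowerSeries.X

lemma Q_ne (N : ℕ) : Q N ≠ 0 := by
  intro h
  have : qp N = 0 := f_inj (by rw [map_zero]; exact h)
  exact qp_cc_ne N (by rw [this, map_zero])

lemma f_inv (N : ℕ) : f ((qp N)⁻¹) = (Q N)⁻¹ := by
  have h : Q N * f ((qp N)⁻¹) = 1 := by
    rw [Q, ← map_mul, qp_mul_inv, map_one]
  exact (inv_eq_of_mul_eq_one_right h).symm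

lemma Q_zero : Q 0 = 1 := by rw [Q, qp_zero, map_one]

lemma Q_succ (N : ℕ) : Q (N + 1) = Q N * (1 - x ^ (N + 1)) := by
  rw [Q, qp_succ, map_mul, map_sub, map_one, map_pow]; rfl

lemma one_sub_x_ne (j : ℕ) : (1 : LaurentSeries ℚ) - x ^ (j + 1) ≠ 0 := by
  intro h
  have h2 : f (1 - (PowerSeries.X : PowerSeries ℚ) ^ (j + 1)) = f 0 := by
    rw [map_sub, map_one, map_pow, map_zero]; exact h
  have h3 : (1 : PowerSeries ℚ) - (PowerSeries.X : PowerSeries ℚ) ^ (j + 1) = 0 := f_inj h2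
  have h4 := congrArg (constantCoeff (R := ℚ)) h3
  rw [map_sub, map_one, map_pow, constantCoeff_X, zero_pow (by omega), sub_zero, map_zero] at h4
  exact one_ne_zero h4

lemma fqb (n k : ℕ) :
    f (qbinom n k) = if k ≤ n then Q n * (Q k)⁻¹ * (Q (n - k))⁻¹ else 0 := by
  unfold qbinom
  split
  · rw [map_mul, map_mul, f_inv, f_inv]; rfl
  · rw [map_zero]

lemma fqb_zero (n : ℕ) : f (qbinom n 0) = 1 := by
  rw [fqb, if_pos (Nat.zero_le _), Nat.sub_zero, Q_zero, inv_one, mul_one,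
    mul_inv_cancel₀ (Q_ne n)]

/-- Pascal rule (image in Laurent series). -/
lemma pascal (M k : ℕ) (hk : k ≤ M) :
    f (qbinom (M + 1) (k + 1)) =
      f (qbinom M (k + 1)) + x ^ (M - k) * f (qbinom M k) := by
  rcases eq_or_lt_of_le hk with rfl | hlt
  · simp [fqb, Q_zero, mul_inv_cancel₀ (Q_ne (k + 1)), mul_inv_cancel₀ (Q_ne k)]
  · have hk1 : k + 1 ≤ M := hlt
    rw [fqb, fqb, fqb, if_pos (by omega), if_pos hk1, if_pos (by omega)]
    have h1 : M + 1 - (k + 1) = M - k := by omega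
    rw [h1]
    have hQM : Q (M + 1) = Q M * (1 - x ^ (M + 1)) := Q_succ M
    have hQk : Q (k + 1) = Q k * (1 - x ^ (k + 1)) := Q_succ k
    have hQMk : Q (M - k) = Q (M - (k + 1)) * (1 - x ^ (M - k)) := by
      rw [show M - k = M - (k + 1) + 1 by omega]; exact Q_succ _
    rw [hQM, hQk, hQMk, show x ^ (M + 1) = x ^ (k + 1) * x ^ (M - k) by
      rw [← pow_add]; congr 1; omega]
    have ha := Q_ne M
    have hb := Q_ne k
    have hc := Q_ne (M - (k + 1))
    have hd1 : (1 : LaurentSeries ℚ) - x ^ (k + 1) ≠ 0 := one_sub_x_ne k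
    have hd2 : (1 : LaurentSeries ℚ) - x ^ (M - k) ≠ 0 := by
      rw [show M - k = M - (k + 1) + 1 by omega]; exact one_sub_x_ne _
    field_simp
    ring

/-- The main identity in Laurent series: Durfee rectangle decomposition. -/
lemma mainK : ∀ (M s : ℕ),
    (Q (s + M))⁻¹ =
      ∑ k ∈ Finset.range (M + 1), x ^ (k * (s + k)) * (Q (s + k))⁻¹ * f (qbinom M k) := by
  intro M
  induction M with
  | zero =>
    intro s
    simp [fqb_zero]
  | succ M ih =>
    intro s
    rw [Finset.sum_range_succ']
    have step1 : ∀ j ∈ Finset.range (M + 1),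
        x ^ ((j+1) * (s + (j+1))) * (Q (s + (j+1)))⁻¹ * f (qbinom (M+1) (j+1)) =
        (x ^ ((j+1) * (s + (j+1))) * (Q (s + (j+1)))⁻¹ * f (qbinom M (j+1)))
        + x ^ (s + M + 1) * (x ^ (j * ((s+1) + j)) * (Q ((s+1) + j))⁻¹ * f (qbinom M j)) := by
      intro j hj
      have hjM : j ≤ M := by
        have := Finset.mem_range.mp hj; omega
      obtain ⟨d, hd⟩ := Nat.exists_eq_add_of_le hjM
      subst hd
      rw [pascal (j + d) j (by omega), mul_add]
      congr 1
      rw [show s + (j + 1) = (s + 1) + j by omega, show j + d - j = d by omega]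
      calc x ^ ((j+1) * ((s+1) + j)) * (Q ((s+1) + j))⁻¹ * (x ^ d * f (qbinom (j+d) j))
          = x ^ ((j+1) * ((s+1) + j) + d) * ((Q ((s+1) + j))⁻¹ * f (qbinom (j+d) j)) := by
            rw [pow_add]; ring
        _ = x ^ ((s + (j + d) + 1) + j * ((s+1) + j)) *
              ((Q ((s+1) + j))⁻¹ * f (qbinom (j+d) j)) := by
            congr 2
            ring
        _ = x ^ (s + (j + d) + 1) *
              (x ^ (j * ((s+1) + j)) * (Q ((s+1) + j))⁻¹ * f (qbinom (j+d) j)) := by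
            rw [pow_add]; ring
    rw [Finset.sum_congr rfl step1, Finset.sum_add_distrib, ← Finset.mul_sum, ← ih (s + 1)]
    have hzero : x ^ (0 * (s + 0)) * (Q (s + 0))⁻¹ * f (qbinom (M+1) 0) =
        x ^ (0 * (s + 0)) * (Q (s + 0))⁻¹ * f (qbinom M 0) := by
      rw [fqb_zero, fqb_zero]
    rw [hzero, add_right_comm]
    have hrec : ∑ k ∈ Finset.range (M + 2), x ^ (k * (s + k)) * (Q (s + k))⁻¹ * f (qbinom M k)
        = (∑ j ∈ Finset.range (M + 1),
            x ^ ((j+1) * (s + (j+1))) * (Q (s + (j+1)))⁻¹ * f (qbinom M (j+1)))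
          + x ^ (0 * (s + 0)) * (Q (s + 0))⁻¹ * f (qbinom M 0) := Finset.sum_range_succ' _ _
    rw [← hrec, show M + 2 = (M + 1) + 1 from rfl, Finset.sum_range_succ, fqb,
      if_neg (by omega), mul_zero, add_zero, ← ih s]
    have e1 : s + (M + 1) = (s + M) + 1 := by omega
    have e2 : s + 1 + M = (s + M) + 1 := by omega
    rw [e1, e2, Q_succ (s + M)]
    have h1 := Q_ne (s + M)
    have h2 := one_sub_x_ne (s + M)
    field_simp
    ring

end QBoxAux

open QBoxAux in
/-- q-binomial box decomposition: for a positive integer `s` and `u ≤ m`,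
`1/(q;q)_{s+m} = Σ_{m'=u}^{m} q^{(m'−u)(s+m')}/(q;q)_{s+m'} · qbinom(m−u, m'−u)`. -/
theorem qbinom_box_decomposition (s : ℕ) (hs : 0 < s) (m u : ℕ) (hu : u ≤ m) :
    (qp (s + m))⁻¹ =
      ∑ m' ∈ Finset.Icc u m,
        (PowerSeries.X : PowerSeries ℚ) ^ ((m' - u) * (s + m')) * (qp (s + m'))⁻¹ *
          qbinom (m - u) (m' - u) := by
  apply f_inj
  rw [map_sum, f_inv]
  have hterm : ∀ m' ∈ Finset.Icc u m,
      f ((PowerSeries.X : PowerSeries ℚ) ^ ((m' - u) * (s + m')) * (qp (s + m'))⁻¹ *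
        qbinom (m - u) (m' - u)) =
      x ^ ((m' - u) * (s + m')) * (Q (s + m'))⁻¹ * f (qbinom (m - u) (m' - u)) := by
    intro m' _
    rw [map_mul, map_mul, map_pow, f_inv]; rfl
  rw [Finset.sum_congr rfl hterm]
  have key := mainK (m - u) (s + u)
  rw [show s + u + (m - u) = s + m by omega] at key
  rw [key]
  refine Finset.sum_nbij' (fun k => u + k) (fun m' => m' - u) ?_ ?_ ?_ ?_ ?_
  · intro a ha
    simp only [Finset.mem_range] at ha
    simp only [Finset.mem_Icc]
    omega
  · intro a ha
    simp only [Finset.mem_Icc] at ha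
    simp only [Finset.mem_range]
    omega
  · intro a _
    omega
  · intro a ha
    simp only [Finset.mem_Icc] at ha
    omega
  · intro k hk
    simp only [Finset.mem_range] at hk
    rw [show u + k - u = k by omega, show s + (u + k) = s + u + k by omega]
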